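/- Let x ∈ ℚₚⁿ with ‖x‖ₚ = p^{β}, and let g : ℝ≥0 → ℝ be such that ξ ↦ g(‖ξ‖ₚ) is in L¹(ℚₚⁿ). Then ∫_{ℚₚⁿ} g(‖ξ‖ₚ) χ(x·ξ) dⁿξ = ‖x‖ₚ^{−n} [ (1 − p^{−n}) Σ_{j=0}^{∞} g(p^{−β−j}) p^{−nj} − g(p^{−β+1}) ]. -/

import Mathlib

open MeasureTheory

/-- The bilinear pairing `x·ξ = Σᵢ xᵢ ξᵢ` on `ℚₚⁿ`. -/
noncomputable def padicDot {p : ℕ} [Fact p.Prime] {n : ℕ} (x ξ : Fin n → ℚ_[p]) : ℚ_[p] :=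
  ∑ i, x i * ξ i

namespace Stmt16Aux

variable {p : ℕ} [Fact p.Prime] {n : ℕ}

lemma p_one_lt : (1:ℝ) < (p:ℝ) := by exact_mod_cast (Fact.out : p.Prime).one_lt

lemma p_pos : (0:ℝ) < (p:ℝ) := lt_trans one_pos p_one_lt

lemma p_ne : (p:ℝ) ≠ 0 := ne_of_gt p_pos

lemma pQ_ne : (p:ℚ_[p]) ≠ 0 := by
  exact_mod_cast (Fact.out : p.Prime).ne_zero

/-- The closed ball of radius `p^k` in `ℚₚⁿ`. -/
def Bb (p : ℕ) [Fact p.Prime] (n : ℕ) (k : ℤ) : Set (Fin n → ℚ_[p]) :=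
  Metric.closedBall 0 ((p:ℝ)^k)

lemma mem_Bb {k : ℤ} {ξ : Fin n → ℚ_[p]} : ξ ∈ Bb p n k ↔ ∀ i, ‖ξ i‖ ≤ (p:ℝ)^k := by
  rw [Bb, Metric.mem_closedBall, dist_zero_right,
    pi_norm_le_iff_of_nonneg (zpow_nonneg p_pos.le _)]

lemma Bb_measurable [MeasurableSpace (Fin n → ℚ_[p])] [BorelSpace (Fin n → ℚ_[p])] (k : ℤ) :
    MeasurableSet (Bb p n k) := measurableSet_closedBall

lemma Bb_compact (k : ℤ) : IsCompact (Bb p n k) := isCompact_closedBall _ _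

lemma Bb_mono {k l : ℤ} (h : k ≤ l) : Bb p n k ⊆ Bb p n l :=
  Metric.closedBall_subset_closedBall (zpow_le_zpow_right₀ p_one_lt.le h)

/-- An index achieving the sup norm. -/
lemma exists_norm_eq (ξ : Fin n → ℚ_[p]) (h : ξ ≠ 0) : ∃ i, ‖ξ‖ = ‖ξ i‖ ∧ ξ i ≠ 0 := by
  rcases isEmpty_or_nonempty (Fin n) with he | hne
  · exact absurd (Subsingleton.elim ξ 0) h
  obtain ⟨i, -, hi⟩ := Finset.exists_mem_eq_sup (Finset.univ : Finset (Fin n))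
    Finset.univ_nonempty (fun i => ‖ξ i‖₊)
  have hnorm : ‖ξ‖ = ‖ξ i‖ := by
    have := congrArg (fun t : NNReal => (t : ℝ)) (Pi.nnnorm_def ξ)
    simpa [hi] using this
  refine ⟨i, hnorm, ?_⟩
  intro h0
  apply h
  apply norm_eq_zero.mp
  rw [hnorm, h0, norm_zero]

lemma norm_eq_pow (ξ : Fin n → ℚ_[p]) (h : ξ ≠ 0) : ∃ m : ℤ, ‖ξ‖ = (p:ℝ)^m := by
  obtain ⟨i, hnorm, h0⟩ := exists_norm_eq ξ h
  exact ⟨-(ξ i).valuation, hnorm.trans (Padic.norm_eq_zpow_neg_valuation h0)⟩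

lemma padicDot_norm_le (x ξ : Fin n → ℚ_[p]) : ‖padicDot x ξ‖ ≤ ‖x‖ * ‖ξ‖ := by
  show ‖∑ i, x i * ξ i‖ ≤ ‖x‖ * ‖ξ‖
  refine IsUltrametricDist.norm_sum_le_of_forall_le_of_nonneg
    (mul_nonneg (norm_nonneg _) (norm_nonneg _)) ?_
  intro i _
  rw [norm_mul]
  exact mul_le_mul (norm_le_pi_norm x i) (norm_le_pi_norm ξ i) (norm_nonneg _) (norm_nonneg _)

lemma padicDot_add_right (x a b : Fin n → ℚ_[p]) :
    padicDot x (a + b) = padicDot x a + padicDot x b := by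
  simp [padicDot, mul_add, Finset.sum_add_distrib]

lemma padicDot_continuous (x : Fin n → ℚ_[p]) :
    Continuous fun ξ : Fin n → ℚ_[p] => padicDot x ξ := by
  show Continuous fun ξ : Fin n → ℚ_[p] => ∑ i, x i * ξ i
  exact continuous_finset_sum _ fun i _ => continuous_const.mul (continuous_apply i)

lemma chi_continuous (χ : AddChar ℚ_[p] ℂ) (hχ : ∀ y : ℚ_[p], χ y = 1 ↔ ‖y‖ ≤ 1) :
    Continuous ⇑χ := by
  rw [continuous_iff_continuousAt]
  intro y
  have h : ∀ z ∈ Metric.ball y 1, χ z = χ y := by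
    intro z hz
    rw [Metric.mem_ball, dist_eq_norm] at hz
    have h1 : χ (z - y) = 1 := (hχ _).mpr hz.le
    rw [show z = y + (z - y) by ring, AddChar.map_add_eq_mul, h1, mul_one]
  have heq : ⇑χ =ᶠ[nhds y] fun _ => χ y := by
    filter_upwards [Metric.ball_mem_nhds y one_pos] with z hz using h z hz
  exact continuousAt_const.congr heq.symm

section Measure

variable [MeasurableSpace (Fin n → ℚ_[p])] [BorelSpace (Fin n → ℚ_[p])]
variable (μ : Measure (Fin n → ℚ_[p])) [μ.IsAddHaarMeasure]

lemma meas_step (k : ℤ) : μ (Bb p n (k+1)) = (p : ENNReal)^n * μ (Bb p n k) := by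
  classical
  set v : (Fin n → Fin p) → (Fin n → ℚ_[p]) :=
    fun d i => ((d i : ℕ) : ℚ_[p]) * (p:ℚ_[p])^(-(k+1)) with hv
  have hppow : (p:ℚ_[p])^(k+1) * (p:ℚ_[p])^(-(k+1)) = 1 := by
    rw [← zpow_add₀ pQ_ne, show (k+1) + -(k+1) = 0 by ring, zpow_zero]
  have hvnorm : ∀ d i, ‖v d i‖ ≤ (p:ℝ)^(k+1) := by
    intro d i
    rw [hv]
    simp only [norm_mul, Padic.norm_p_zpow, neg_neg]
    calc ‖((d i : ℕ) : ℚ_[p])‖ * (p:ℝ)^(k+1)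
        ≤ 1 * (p:ℝ)^(k+1) := by
          refine mul_le_mul_of_nonneg_right ?_ (zpow_nonneg p_pos.le _)
          exact_mod_cast Padic.norm_int_le_one ((d i : ℕ) : ℤ)
      _ = (p:ℝ)^(k+1) := one_mul _
  have hcov : Bb p n (k+1) = ⋃ d, Metric.closedBall (v d) ((p:ℝ)^k) := by
    ext ξ
    constructor
    · intro hξ
      rw [mem_Bb] at hξ
      have hy : ∀ i, ‖ξ i * (p:ℚ_[p])^(k+1)‖ ≤ 1 := by
        intro i
        rw [norm_mul, Padic.norm_p_zpow]
        calc ‖ξ i‖ * (p:ℝ)^(-(k+1))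
            ≤ (p:ℝ)^(k+1) * (p:ℝ)^(-(k+1)) :=
              mul_le_mul_of_nonneg_right (hξ i) (zpow_nonneg p_pos.le _)
          _ = 1 := by
              rw [← zpow_add₀ p_ne, show (k+1) + -(k+1) = 0 by ring, zpow_zero]
      set z : ∀ _ : Fin n, ℤ_[p] := fun i => ⟨ξ i * (p:ℚ_[p])^(k+1), hy i⟩ with hz
      set d : Fin n → Fin p := fun i => ⟨(z i).appr 1, by simpa using (z i).appr_lt 1⟩ with hd
      refine Set.mem_iUnion.mpr ⟨d, ?_⟩
      rw [Metric.mem_closedBall, dist_eq_norm,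
        pi_norm_le_iff_of_nonneg (zpow_nonneg p_pos.le _)]
      intro i
      set w : ℤ_[p] := z i - (((z i).appr 1 : ℕ) : ℤ_[p]) with hw
      have h1 : ‖((w : ℤ_[p]) : ℚ_[p])‖ ≤ (p:ℝ)^(-1:ℤ) := by
        rw [← PadicInt.norm_def]
        have hmem : w ∈ Ideal.span {(p:ℤ_[p])^1} := by
          simpa [hw] using PadicInt.appr_spec 1 (z i)
        simpa using (PadicInt.norm_le_pow_iff_mem_span_pow w 1).mpr hmem
      have hzi : ((z i : ℤ_[p]) : ℚ_[p]) = ξ i * (p:ℚ_[p])^(k+1) := rfl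
      have hwcast : ((w : ℤ_[p]) : ℚ_[p])
          = ξ i * (p:ℚ_[p])^(k+1) - (((z i).appr 1 : ℕ) : ℚ_[p]) := by
        rw [hw]
        push_cast
        rfl
      have hrepr : ξ i - v d i = ((w : ℤ_[p]) : ℚ_[p]) * (p:ℚ_[p])^(-(k+1)) := by
        rw [hwcast]
        have hdi : ((d i : ℕ) : ℚ_[p]) = (((z i).appr 1 : ℕ) : ℚ_[p]) := rfl
        simp only [hv]
        rw [hdi]
        linear_combination (-(ξ i)) * hppow
      have : (ξ - v d) i = ξ i - v d i := rfl
      rw [this, hrepr, norm_mul, Padic.norm_p_zpow, neg_neg]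
      calc ‖((w : ℤ_[p]) : ℚ_[p])‖ * (p:ℝ)^(k+1)
          ≤ (p:ℝ)^(-1:ℤ) * (p:ℝ)^(k+1) :=
            mul_le_mul_of_nonneg_right h1 (zpow_nonneg p_pos.le _)
        _ = (p:ℝ)^k := by rw [← zpow_add₀ p_ne]; congr 1; ring
    · intro hξ
      obtain ⟨d, hd⟩ := Set.mem_iUnion.mp hξ
      rw [Metric.mem_closedBall, dist_eq_norm] at hd
      rw [mem_Bb]
      intro i
      have h2 : ‖ξ i - v d i‖ ≤ (p:ℝ)^k := le_trans (norm_le_pi_norm (ξ - v d) i) hd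
      rw [show ξ i = (ξ i - v d i) + v d i by ring]
      refine le_trans (IsUltrametricDist.norm_add_le_max _ _) (max_le ?_ (hvnorm d i))
      exact h2.trans (zpow_le_zpow_right₀ p_one_lt.le (by omega))
  have hdisj : Pairwise (Function.onFun Disjoint
      fun d => Metric.closedBall (v d) ((p:ℝ)^k)) := by
    intro d d' hne
    rw [Function.onFun, Set.disjoint_left]
    intro ξ h1 h2
    obtain ⟨i, hi⟩ := Function.ne_iff.mp hne
    rw [Metric.mem_closedBall, dist_eq_norm] at h1 h2
    have hb1 : ‖ξ i - v d i‖ ≤ (p:ℝ)^k := le_trans (norm_le_pi_norm (ξ - v d) i) h1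
    have hb2 : ‖ξ i - v d' i‖ ≤ (p:ℝ)^k := le_trans (norm_le_pi_norm (ξ - v d') i) h2
    have hle : ‖v d i - v d' i‖ ≤ (p:ℝ)^k := by
      rw [show v d i - v d' i = (v d i - ξ i) + (ξ i - v d' i) by ring]
      refine le_trans (IsUltrametricDist.norm_add_le_max _ _) (max_le ?_ hb2)
      rwa [norm_sub_rev]
    set m : ℤ := ((d i : ℕ) : ℤ) - ((d' i : ℕ) : ℤ) with hmdef
    have hm : m ≠ 0 := by
      intro h
      rw [hmdef] at h
      apply hi
      apply Fin.ext
      omega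
    have hnd : ¬ ((p:ℤ) ∣ m) := by
      intro hdvd
      apply hm
      refine Int.eq_zero_of_abs_lt_dvd hdvd ?_
      have hd1 : (d i : ℕ) < p := (d i).2
      have hd2 : (d' i : ℕ) < p := (d' i).2
      rw [hmdef, abs_lt]
      constructor <;> omega
    have hone : ‖((m : ℤ) : ℚ_[p])‖ = 1 := by
      refine le_antisymm (Padic.norm_int_le_one _) (not_lt.mp ?_)
      intro hlt
      exact hnd (Padic.norm_intCast_lt_one_iff.mp hlt)
    have hvv : v d i - v d' i = ((m : ℤ) : ℚ_[p]) * (p:ℚ_[p])^(-(k+1)) := by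
      rw [hmdef]
      simp only [hv]
      push_cast
      ring
    rw [hvv, norm_mul, hone, one_mul, Padic.norm_p_zpow, neg_neg] at hle
    exact absurd hle (not_le.mpr (zpow_lt_zpow_right₀ p_one_lt (by omega)))
  have hball : ∀ d, μ (Metric.closedBall (v d) ((p:ℝ)^k)) = μ (Bb p n k) := by
    intro d
    have hset : Metric.closedBall (v d) ((p:ℝ)^k) = (fun ξ => (-(v d)) + ξ) ⁻¹' (Bb p n k) := by
      ext ξ
      simp only [Set.mem_preimage, Bb, Metric.mem_closedBall, dist_eq_norm, dist_zero_right]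
      rw [show (-(v d)) + ξ = ξ - v d by ring, sub_zero]
    rw [hset, measure_preimage_add]
  rw [hcov, measure_iUnion hdisj (fun d => measurableSet_closedBall)]
  rw [tsum_fintype]
  simp only [hball]
  rw [Finset.sum_const, Finset.card_univ]
  have hcard : Fintype.card (Fin n → Fin p) = p ^ n := by
    simp [Fintype.card_fun]
  rw [hcard, nsmul_eq_mul]
  push_cast
  ring

lemma Bb_ne_top (k : ℤ) : μ (Bb p n k) ≠ ⊤ :=
  ((Bb_compact k).measure_lt_top (μ := μ)).ne

lemma ball_toReal (hμ : μ (Metric.closedBall 0 1) = 1) (k : ℤ) :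
    (μ (Bb p n k)).toReal = (p:ℝ)^((n:ℤ)*k) := by
  induction k using Int.induction_on with
  | zero =>
    have h0 : Bb p n 0 = Metric.closedBall (0 : Fin n → ℚ_[p]) 1 := by
      simp [Bb]
    rw [h0, hμ]
    simp
  | succ k ih =>
    have hstep := congrArg ENNReal.toReal (meas_step μ (k:ℤ))
    rw [ENNReal.toReal_mul, ih] at hstep
    rw [hstep]
    have htr : ((p : ENNReal)^n).toReal = (p:ℝ)^(n:ℕ) := by
      simp
    rw [htr, ← zpow_natCast (p:ℝ) n, ← zpow_add₀ p_ne]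
    congr 1
    push_cast
    ring
  | pred k ih =>
    have hstep := congrArg ENNReal.toReal (meas_step μ (-(k:ℤ)-1))
    rw [ENNReal.toReal_mul, show (-(k:ℤ)-1+1) = -(k:ℤ) by ring, ih] at hstep
    have htr : ((p : ENNReal)^n).toReal = (p:ℝ)^(n:ℕ) := by
      simp
    rw [htr] at hstep
    have hpow_ne : (p:ℝ)^(n:ℕ) ≠ 0 := pow_ne_zero _ p_ne
    have hgoal : (μ (Bb p n (-(k:ℤ)-1))).toReal = (p:ℝ)^((n:ℤ)*(-(k:ℤ))) / (p:ℝ)^(n:ℕ) := by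
      rw [eq_div_iff hpow_ne]
      linarith [hstep]
    rw [hgoal, ← zpow_natCast (p:ℝ) n, ← zpow_sub₀ p_ne]
    congr 1
    push_cast
    ring

lemma meas_zero (hμ : μ (Metric.closedBall 0 1) = 1) (hn : 0 < n) :
    μ ({(0 : Fin n → ℚ_[p])} : Set (Fin n → ℚ_[p])) = 0 := by
  have hlt : (p:ℝ)^(-(n:ℤ)) < 1 := by
    rw [zpow_neg, zpow_natCast]
    refine inv_lt_one_of_one_lt₀ ?_
    exact one_lt_pow₀ p_one_lt hn.ne'
  have hb : ∀ j : ℕ, μ {(0 : Fin n → ℚ_[p])} ≤ ENNReal.ofReal (((p:ℝ)^(-(n:ℤ)))^j) := by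
    intro j
    have hsub : ({(0 : Fin n → ℚ_[p])} : Set (Fin n → ℚ_[p])) ⊆ Bb p n (-(j:ℤ)) := by
      intro ξ hξ
      rw [Set.mem_singleton_iff] at hξ
      subst hξ
      rw [mem_Bb]
      intro i
      simp only [Pi.zero_apply, norm_zero]
      positivity
    refine le_trans (measure_mono hsub) ?_
    rw [← ENNReal.ofReal_toReal (Bb_ne_top μ (-(j:ℤ))), ball_toReal μ hμ]
    apply le_of_eq
    congr 1
    rw [← zpow_natCast ((p:ℝ)^(-(n:ℤ))) j, ← zpow_mul]
    congr 1
    push_cast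
    ring
  have h1 : Filter.Tendsto (fun j : ℕ => ((p:ℝ)^(-(n:ℤ)))^j) Filter.atTop (nhds 0) :=
    tendsto_pow_atTop_nhds_zero_of_lt_one (by positivity) hlt
  have hlim : Filter.Tendsto (fun j : ℕ => ENNReal.ofReal (((p:ℝ)^(-(n:ℤ)))^j))
      Filter.atTop (nhds 0) := by
    simpa using ENNReal.tendsto_ofReal h1
  exact le_antisymm (ge_of_tendsto hlim (Filter.Eventually.of_forall hb)) zero_le

variable (χ : AddChar ℚ_[p] ℂ)

lemma J1 (hχ : ∀ y : ℚ_[p], χ y = 1 ↔ ‖y‖ ≤ 1) (x : Fin n → ℚ_[p]) (k : ℤ)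
    (h : ‖x‖ * (p:ℝ)^k ≤ 1) :
    ∫ ξ in Bb p n k, (χ (padicDot x ξ) : ℂ) ∂μ = (((μ (Bb p n k)).toReal : ℝ) : ℂ) := by
  have hone : Set.EqOn (fun ξ => (χ (padicDot x ξ) : ℂ)) (fun _ => (1:ℂ)) (Bb p n k) := by
    intro ξ hξ
    show (χ (padicDot x ξ) : ℂ) = 1
    refine (hχ _).mpr ?_
    refine le_trans (padicDot_norm_le x ξ) (le_trans ?_ h)
    refine mul_le_mul_of_nonneg_left ?_ (norm_nonneg x)
    rw [Bb, Metric.mem_closedBall, dist_zero_right] at hξ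
    exact hξ
  rw [setIntegral_congr_fun (Bb_measurable k) hone]
  simp
  rfl

lemma J2 (hχ : ∀ y : ℚ_[p], χ y = 1 ↔ ‖y‖ ≤ 1) (x : Fin n → ℚ_[p]) (k : ℤ)
    (h : 1 < ‖x‖ * (p:ℝ)^k) :
    ∫ ξ in Bb p n k, (χ (padicDot x ξ) : ℂ) ∂μ = 0 := by
  have hx0 : x ≠ 0 := by
    rintro rfl
    rw [norm_zero, zero_mul] at h
    norm_num at h
  obtain ⟨i, hix, hxi0⟩ := exists_norm_eq x hx0
  set ξ₀ : Fin n → ℚ_[p] := Pi.single i ((p:ℚ_[p])^(-k)) with hξ₀def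
  have hξ₀mem : ∀ j, ‖ξ₀ j‖ ≤ (p:ℝ)^k := by
    intro j
    rcases eq_or_ne j i with rfl | hj
    · simp [hξ₀def, Padic.norm_p_zpow]
    · simp only [hξ₀def, Pi.single_eq_of_ne hj, norm_zero]
      positivity
  have hdot0 : padicDot x ξ₀ = x i * (p:ℚ_[p])^(-k) := by
    show (∑ j, x j * ξ₀ j) = x i * (p:ℚ_[p])^(-k)
    rw [hξ₀def]
    simp [Pi.single_apply, mul_ite]
  have hne1 : (χ (padicDot x ξ₀) : ℂ) ≠ 1 := by
    rw [hdot0]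
    intro hcon
    have hle := (hχ _).mp hcon
    rw [norm_mul, Padic.norm_p_zpow, neg_neg, ← hix] at hle
    exact absurd (lt_of_lt_of_le h hle) (lt_irrefl _)
  have hT : MeasurePreserving (fun ξ : Fin n → ℚ_[p] => ξ₀ + ξ) μ μ :=
    measurePreserving_add_left μ ξ₀
  have hTe : MeasurableEmbedding (fun ξ : Fin n → ℚ_[p] => ξ₀ + ξ) :=
    (Homeomorph.addLeft ξ₀).measurableEmbedding
  have hpre : (fun ξ : Fin n → ℚ_[p] => ξ₀ + ξ) ⁻¹' (Bb p n k) = Bb p n k := by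
    ext ξ
    simp only [Set.mem_preimage, mem_Bb, Pi.add_apply]
    constructor
    · intro hh j
      rw [show ξ j = (ξ₀ j + ξ j) + (-(ξ₀ j)) by ring]
      refine le_trans (IsUltrametricDist.norm_add_le_max _ _) (max_le (hh j) ?_)
      rw [norm_neg]
      exact hξ₀mem j
    · intro hh j
      exact le_trans (IsUltrametricDist.norm_add_le_max _ _) (max_le (hξ₀mem j) (hh j))
  have key := hT.setIntegral_preimage_emb hTe (fun ξ => (χ (padicDot x ξ) : ℂ)) (Bb p n k)
  rw [hpre] at key
  have expand : ∀ ξ : Fin n → ℚ_[p],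
      (χ (padicDot x (ξ₀ + ξ)) : ℂ) = (χ (padicDot x ξ₀) : ℂ) * χ (padicDot x ξ) := by
    intro ξ
    rw [padicDot_add_right, AddChar.map_add_eq_mul]
  simp only [expand] at key
  rw [integral_const_mul] at key
  have hfac : ((χ (padicDot x ξ₀) : ℂ) - 1) * ∫ ξ in Bb p n k, (χ (padicDot x ξ) : ℂ) ∂μ = 0 := by
    linear_combination key
  rcases mul_eq_zero.mp hfac with hc | hJ
  · exact absurd (sub_eq_zero.mp hc) hne1
  · exact hJ

end Measure

end Stmt16Aux

open Stmt16Aux in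
/-- the Fourier transform of a radial integrable function on `ℚₚⁿ`. -/
theorem stmt16 {p : ℕ} [Fact p.Prime] {n : ℕ}
    [MeasurableSpace (Fin n → ℚ_[p])] [BorelSpace (Fin n → ℚ_[p])]
    (μ : Measure (Fin n → ℚ_[p])) [μ.IsAddHaarMeasure]
    (hμ : μ (Metric.closedBall 0 1) = 1)
    (χ : AddChar ℚ_[p] ℂ)
    (hχ : ∀ y : ℚ_[p], χ y = 1 ↔ ‖y‖ ≤ 1)
    (hχu : ∀ y : ℚ_[p], ‖χ y‖ = 1)
    (g : ℝ → ℝ)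
    (hg : Integrable (fun ξ : Fin n → ℚ_[p] => g ‖ξ‖) μ)
    (x : Fin n → ℚ_[p]) (β : ℤ) (hx : ‖x‖ = (p : ℝ) ^ β) :
    (∫ ξ : Fin n → ℚ_[p], (g ‖ξ‖ : ℂ) * χ (padicDot x ξ) ∂μ) =
      ((‖x‖ ^ (-(n : ℝ)) *
        ((1 - (p : ℝ) ^ (-(n : ℤ))) *
            ∑' j : ℕ, g ((p : ℝ) ^ (-β - (j : ℤ))) * (p : ℝ) ^ (-((n * j : ℕ) : ℤ)) -
          g ((p : ℝ) ^ (-β + 1))) : ℝ) : ℂ) := by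
  classical
  rcases Nat.eq_zero_or_pos n with hn0 | hn
  · exfalso
    subst hn0
    have hx0 : ‖x‖ = 0 := by rw [Subsingleton.elim x 0, norm_zero]
    rw [hx0] at hx
    have hpos : (0:ℝ) < (p:ℝ)^β := zpow_pos p_pos β
    linarith [hx ▸ hpos]
  have hχc : Continuous ⇑χ := chi_continuous χ hχ
  have hdotc : Continuous fun ξ : Fin n → ℚ_[p] => padicDot x ξ := padicDot_continuous x
  set F : (Fin n → ℚ_[p]) → ℂ := fun ξ => (g ‖ξ‖ : ℂ) * χ (padicDot x ξ) with hF
  have hFm : AEStronglyMeasurable F μ := by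
    refine AEStronglyMeasurable.mul ?_ ((hχc.comp hdotc).aestronglyMeasurable)
    exact Complex.continuous_ofReal.comp_aestronglyMeasurable hg.1
  have hFi : Integrable F μ := by
    refine Integrable.mono' hg.norm hFm (Filter.Eventually.of_forall fun ξ => ?_)
    rw [hF]
    simp only [norm_mul, Complex.norm_real]
    rw [show ‖χ (padicDot x ξ)‖ = 1 from by exact hχu _, mul_one]
  set S : ℤ → Set (Fin n → ℚ_[p]) := fun k => {ξ | ‖ξ‖ = (p:ℝ)^k} with hS
  have hSm : ∀ k, MeasurableSet (S k) := by
    intro k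
    have hpre : S k = (fun ξ : Fin n → ℚ_[p] => ‖ξ‖) ⁻¹' {(p:ℝ)^k} := rfl
    rw [hpre]
    exact continuous_norm.measurable (measurableSet_singleton _)
  have hSdisj : Pairwise (Function.onFun Disjoint S) := by
    intro k l hkl
    rw [Function.onFun, Set.disjoint_left]
    intro ξ h1 h2
    apply hkl
    have e1 : ‖ξ‖ = (p:ℝ)^k := h1
    have e2 : ‖ξ‖ = (p:ℝ)^l := h2
    have h12 : (p:ℝ)^k = (p:ℝ)^l := e1.symm.trans e2
    have hle1 : k ≤ l := by
      by_contra hc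
      exact absurd h12 (ne_of_gt (zpow_lt_zpow_right₀ p_one_lt (by omega)))
    have hle2 : l ≤ k := by
      by_contra hc
      exact absurd h12 (ne_of_lt (zpow_lt_zpow_right₀ p_one_lt (by omega)))
    omega
  have hSdiff : ∀ k : ℤ, S k = Bb p n k \ Bb p n (k-1) := by
    intro k
    ext ξ
    simp only [hS, Set.mem_setOf_eq, Set.mem_diff]
    constructor
    · intro hξ
      constructor
      · rw [Bb, Metric.mem_closedBall, dist_zero_right, hξ]
      · intro hmem
        rw [Bb, Metric.mem_closedBall, dist_zero_right, hξ] at hmem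
        exact absurd hmem (not_le.mpr (zpow_lt_zpow_right₀ p_one_lt (by omega)))
    · rintro ⟨h1, h2⟩
      rw [Bb, Metric.mem_closedBall, dist_zero_right] at h1 h2
      have hξ0 : ξ ≠ 0 := by
        rintro rfl
        apply h2
        rw [norm_zero]
        positivity
      obtain ⟨m, hm⟩ := norm_eq_pow ξ hξ0
      rw [hm] at h1 h2 ⊢
      have hm1 : m ≤ k := by
        by_contra hc
        exact absurd h1 (not_le.mpr (zpow_lt_zpow_right₀ p_one_lt (by omega)))
      have hm2 : k - 1 < m := by
        by_contra hcon
        exact h2 (zpow_le_zpow_right₀ p_one_lt.le (not_lt.mp hcon))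
      have : m = k := by omega
      rw [this]
  have hUnion : (⋃ k : ℤ, S k) = ({(0 : Fin n → ℚ_[p])} : Set (Fin n → ℚ_[p]))ᶜ := by
    ext ξ
    simp only [Set.mem_iUnion, Set.mem_compl_iff, Set.mem_singleton_iff, hS, Set.mem_setOf_eq]
    constructor
    · rintro ⟨k, hk⟩ rfl
      rw [norm_zero] at hk
      exact absurd hk.symm (ne_of_gt (zpow_pos p_pos k))
    · intro hξ
      exact norm_eq_pow ξ hξ
  have h0 : μ ({(0 : Fin n → ℚ_[p])} : Set (Fin n → ℚ_[p])) = 0 := meas_zero μ hμ hn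
  have h0c : ∫ ξ in ({(0 : Fin n → ℚ_[p])} : Set (Fin n → ℚ_[p]))ᶜ, F ξ ∂μ = ∫ ξ, F ξ ∂μ := by
    rw [← integral_add_compl (measurableSet_singleton (0 : Fin n → ℚ_[p])) hFi]
    have hz : ∫ ξ in ({(0 : Fin n → ℚ_[p])} : Set (Fin n → ℚ_[p])), F ξ ∂μ = 0 := by
      rw [Measure.restrict_eq_zero.mpr h0, integral_zero_measure]
    rw [hz, zero_add]
  have hsum0 : HasSum (fun k : ℤ => ∫ ξ in S k, F ξ ∂μ) (∫ ξ, F ξ ∂μ) := by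
    have hiu := hasSum_integral_iUnion hSm hSdisj (hFi.integrableOn)
    rwa [hUnion, h0c] at hiu
  set cJ : ℤ → ℝ := fun k => if k + β ≤ 0 then (p:ℝ)^((n:ℤ)*k) else 0 with hcJ
  have hJ : ∀ k : ℤ, ∫ ξ in Bb p n k, (χ (padicDot x ξ) : ℂ) ∂μ = ((cJ k : ℝ) : ℂ) := by
    intro k
    by_cases hk : k + β ≤ 0
    · rw [J1 μ χ hχ x k ?_, ball_toReal μ hμ k]
      · rw [hcJ]
        simp only [if_pos hk]
      · rw [hx, mul_comm, ← zpow_add₀ p_ne]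
        calc (p:ℝ)^(k+β) ≤ (p:ℝ)^(0:ℤ) := zpow_le_zpow_right₀ p_one_lt.le (by omega)
          _ = 1 := zpow_zero _
    · rw [J2 μ χ hχ x k ?_]
      · rw [hcJ]
        simp only [if_neg hk]
        norm_num
      · rw [hx, mul_comm, ← zpow_add₀ p_ne]
        calc (1:ℝ) = (p:ℝ)^(0:ℤ) := (zpow_zero _).symm
          _ < (p:ℝ)^(k+β) := zpow_lt_zpow_right₀ p_one_lt (by omega)
  set Tr : ℤ → ℝ := fun k => g ((p:ℝ)^k) * (cJ k - cJ (k-1)) with hTrdef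
  have hterm : ∀ k : ℤ, ∫ ξ in S k, F ξ ∂μ = ((Tr k : ℝ) : ℂ) := by
    intro k
    have hcongr : Set.EqOn F (fun ξ => ((g ((p:ℝ)^k) : ℝ) : ℂ) * χ (padicDot x ξ)) (S k) := by
      intro ξ hξ
      have hnorm : ‖ξ‖ = (p:ℝ)^k := hξ
      rw [hF]
      simp only
      rw [hnorm]
    rw [setIntegral_congr_fun (hSm k) hcongr, integral_const_mul, hSdiff k,
      integral_diff (Bb_measurable (k-1)) ?_ (Bb_mono (by omega)), hJ k, hJ (k-1)]
    · rw [hTrdef]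
      push_cast
      ring
    · exact ((hχc.comp hdotc).continuousOn).integrableOn_compact (Bb_compact k)
  have hTeq : (fun k : ℤ => ∫ ξ in S k, F ξ ∂μ) = fun k => ((Tr k : ℝ) : ℂ) := funext hterm
  have hsum : HasSum (fun k : ℤ => ((Tr k : ℝ) : ℂ)) (∫ ξ, F ξ ∂μ) := hTeq ▸ hsum0
  have hTrsum : Summable Tr := Complex.summable_ofReal.mp hsum.summable
  have hint : ∫ ξ, F ξ ∂μ = ((∑' k : ℤ, Tr k : ℝ) : ℂ) := by
    rw [← hsum.tsum_eq]
    exact (Complex.ofReal_tsum Tr).symm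
  have he_inj : Function.Injective (fun j : ℕ => 1 - β - (j:ℤ)) := by
    intro a b hab
    simp only at hab
    omega
  have hsupp : Function.support Tr ⊆ Set.range (fun j : ℕ => 1 - β - (j:ℤ)) := by
    intro k hk
    rw [Function.mem_support] at hk
    by_cases hkle : k ≤ 1 - β
    · refine ⟨(1 - β - k).toNat, ?_⟩
      simp only
      omega
    · exfalso
      apply hk
      rw [hTrdef]
      simp only
      rw [hcJ]
      simp only
      rw [if_neg (by omega), if_neg (by omega), sub_zero, mul_zero]
  have hsn : Summable (fun j : ℕ => Tr (1 - β - (j:ℤ))) := hTrsum.comp_injective he_inj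
  have hre : ∑' k : ℤ, Tr k
      = Tr (1 - β - ((0:ℕ):ℤ)) + ∑' j : ℕ, Tr (1 - β - ((j + 1 : ℕ) : ℤ)) := by
    rw [← Function.Injective.tsum_eq he_inj hsupp, Summable.tsum_eq_zero_add hsn]
  have hT0 : Tr (1 - β - ((0:ℕ):ℤ)) = - (g ((p:ℝ)^(-β+1)) * (p:ℝ)^((n:ℤ)*(-β))) := by
    rw [show (1:ℤ) - β - ((0:ℕ):ℤ) = 1 - β by simp]
    rw [hTrdef]
    simp only
    rw [show (1:ℤ) - β - 1 = -β by ring]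
    rw [hcJ]
    simp only
    rw [if_neg (by omega), if_pos (by omega), show (1:ℤ) - β = -β + 1 by ring]
    ring
  have hTj : ∀ j : ℕ, Tr (1 - β - ((j + 1 : ℕ) : ℤ))
      = ((p:ℝ)^((n:ℤ)*(-β)) * (1 - (p:ℝ)^(-(n:ℤ)))) *
        (g ((p:ℝ)^(-β - (j:ℤ))) * (p:ℝ)^(-((n*j:ℕ):ℤ))) := by
    intro j
    rw [hTrdef]
    simp only
    rw [show (1:ℤ) - β - ((j + 1 : ℕ) : ℤ) = -β - (j:ℤ) by push_cast; ring]
    rw [hcJ]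
    simp only
    rw [if_pos (by omega), if_pos (by omega)]
    rw [show (n:ℤ) * (-β - (j:ℤ)) = (n:ℤ)*(-β) + (-((n*j:ℕ):ℤ)) by push_cast; ring,
      show (n:ℤ) * (-β - (j:ℤ) - 1) = ((n:ℤ)*(-β) + (-((n*j:ℕ):ℤ))) + (-(n:ℤ)) by
        push_cast; ring]
    simp only [zpow_add₀ p_ne]
    ring
  have hrpow : ‖x‖ ^ (-(n:ℝ)) = (p:ℝ)^((n:ℤ)*(-β)) := by
    rw [hx, Real.rpow_neg (zpow_nonneg p_pos.le β), Real.rpow_natCast,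
      ← zpow_natCast ((p:ℝ)^β) n, ← zpow_mul, ← zpow_neg]
    congr 1
    ring
  rw [hint, hrpow, hre, hT0, tsum_congr hTj, tsum_mul_left]
  rw [Complex.ofReal_inj]
  ring
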